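/- Let G = (V, E) be a finite simple graph of neighborhood independence at most r (r ≥ 1), and let x and y be two greedy packings of G. Let U ⊆ V be the set of vertices v with Σ_y(v) ≥ 1/2. Then Σ_{v ∈ V} y_v ≥ (1/(2r)) · Σ_{v ∈ U} x_v. -/

import Mathlib

open Finset
open Classical

/-- A greedy packing of a finite simple graph `G`: a nonnegative vertex vector `x` for
which there is a (strict) linear order `p` on the vertices such that for every vertex `v`,
`x v` plus the sum of `x u` over neighbors `u` of `v` preceding `v` is at most `1`. -/
def IsGreedyPacking {V : Type*} [Fintype V] (G : SimpleGraph V) [DecidableRel G.Adj]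
    (x : V → ℝ) : Prop :=
  (∀ v : V, 0 ≤ x v) ∧
  ∃ p : V → V → Prop, IsStrictTotalOrder V p ∧
    ∀ v : V, x v + ∑ u ∈ G.neighborFinset v, (if p u v then x u else 0) ≤ 1

-- max element of a nonempty finset under a strict total order
lemma exists_p_max {V : Type*} [DecidableEq V] (p : V → V → Prop) (hp : IsStrictTotalOrder V p)
    (S : Finset V) (hS : S.Nonempty) : ∃ z ∈ S, ∀ w ∈ S, w ≠ z → p w z := by
  classical
  induction S using Finset.induction with
  | empty => exact absurd hS (by simp)
  | @insert a T ha ih =>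
    rcases T.eq_empty_or_nonempty with rfl | hT
    · exact ⟨a, by simp, by simp⟩
    · obtain ⟨z, hzT, hz⟩ := ih hT
      rcases (show p a z ∨ a = z ∨ p z a by by_contra h; push_neg at h; exact h.2.1 (hp.trichotomous a z h.1 h.2.2)) with hpaz | rfl | hpza
      · exact ⟨z, Finset.mem_insert_of_mem hzT, by
          intro w hw hwz
          rcases Finset.mem_insert.1 hw with rfl | hwT
          · exact hpaz
          · exact hz w hwT hwz⟩
      · exact absurd hzT ha
      · refine ⟨a, Finset.mem_insert_self a T, ?_⟩
        intro w hw hwa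
        rcases Finset.mem_insert.1 hw with rfl | hwT
        · exact absurd rfl hwa
        · rcases eq_or_ne w z with rfl | hwz
          · exact hpza
          · exact hp.trans w z a (hz w hwT hwz) hpza

lemma sum_le_indep {V : Type*} [Fintype V] [DecidableEq V] (G : SimpleGraph V)
    [DecidableRel G.Adj] (x : V → ℝ) (hx0 : ∀ v, 0 ≤ x v)
    (p : V → V → Prop) (hp : IsStrictTotalOrder V p)
    (hpack : ∀ v : V, x v + ∑ u ∈ G.neighborFinset v, (if p u v then x u else 0) ≤ 1) :
    ∀ n : ℕ, ∀ S : Finset V, S.card ≤ n →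
      ∃ I : Finset V, I ⊆ S ∧ (∀ a ∈ I, ∀ b ∈ I, a ≠ b → ¬ G.Adj a b) ∧
        ∑ w ∈ S, x w ≤ (I.card : ℝ) := by
  intro n
  induction n with
  | zero =>
    intro S hS
    have : S = ∅ := Finset.card_eq_zero.1 (Nat.le_zero.1 hS)
    exact ⟨∅, by simp [this]⟩
  | succ n ih =>
    intro S hS
    rcases S.eq_empty_or_nonempty with rfl | hne
    · exact ⟨∅, by simp⟩
    obtain ⟨z, hzS, hz⟩ := exists_p_max p hp S hne
    set T := S.filter (fun w => w ≠ z ∧ ¬ G.Adj z w) with hT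
    have hTsub : T ⊆ S := Finset.filter_subset _ _
    have hTcard : T.card ≤ n := by
      have h1 : T.card < S.card := by
        apply Finset.card_lt_card
        refine ⟨hTsub, fun hsub => ?_⟩
        have := hsub hzS
        simp [hT] at this
      omega
    obtain ⟨I', hI'sub, hI'ind, hI'sum⟩ := ih T hTcard
    have hzI' : z ∉ I' := fun h => by have := hI'sub h; simp [hT] at this
    refine ⟨insert z I', ?_, ?_, ?_⟩
    · intro a ha
      rcases Finset.mem_insert.1 ha with rfl | ha
      · exact hzS
      · exact hTsub (hI'sub ha)
    · have hnadj : ∀ b ∈ I', ¬ G.Adj z b := by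
        intro b hb hadj
        have := hI'sub hb
        simp [hT] at this
        exact this.2.2 hadj
      intro a ha b hb hab
      rcases Finset.mem_insert.1 ha with ha1 | ha1
      · subst ha1
        rcases Finset.mem_insert.1 hb with hb1 | hb1
        · exact absurd hb1.symm hab
        · exact hnadj b hb1
      · rcases Finset.mem_insert.1 hb with hb1 | hb1
        · subst hb1
          exact fun hadj => hnadj a ha1 (G.adj_symm hadj)
        · exact hI'ind a ha1 b hb1 hab
    · -- sum bound
      have hsplit : S = T ∪ S.filter (fun w => w = z ∨ G.Adj z w) := by
        ext w
        simp only [hT, Finset.mem_union, Finset.mem_filter]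
        constructor
        · intro hw
          by_cases h1 : w = z ∨ G.Adj z w
          · exact Or.inr ⟨hw, h1⟩
          · push_neg at h1; exact Or.inl ⟨hw, h1⟩
        · rintro (⟨hw, _⟩ | ⟨hw, _⟩) <;> exact hw
      have hdisj : Disjoint T (S.filter (fun w => w = z ∨ G.Adj z w)) := by
        rw [Finset.disjoint_left]
        intro w hw hw2
        simp [hT] at hw
        simp at hw2
        rcases hw2.2 with rfl | h
        · exact hw.2.1 rfl
        · exact hw.2.2 h
      set A := S.filter (fun w => w = z ∨ G.Adj z w) with hA
      have hzA : z ∈ A := by simp [hA, hzS]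
      have hAsum : ∑ w ∈ A, x w ≤ 1 := by
        have h1 : ∑ w ∈ A, x w = x z + ∑ w ∈ A.erase z, x w :=
          (Finset.add_sum_erase A x hzA).symm
        have h2 : ∑ w ∈ A.erase z, x w
            = ∑ w ∈ A.erase z, (if p w z then x w else 0) := by
          apply Finset.sum_congr rfl
          intro w hw
          have hwz : w ≠ z := Finset.ne_of_mem_erase hw
          have hwS : w ∈ S := Finset.filter_subset _ _ (Finset.mem_of_mem_erase hw)
          rw [if_pos (hz w hwS hwz)]
        have h3 : A.erase z ⊆ G.neighborFinset z := by
          intro w hw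
          have hwz : w ≠ z := Finset.ne_of_mem_erase hw
          have := Finset.mem_of_mem_erase hw
          simp [hA] at this
          rcases this.2 with rfl | h
          · exact absurd rfl hwz
          · simpa using h
        have h4 : ∑ w ∈ A.erase z, (if p w z then x w else 0)
            ≤ ∑ u ∈ G.neighborFinset z, (if p u z then x u else 0) := by
          apply Finset.sum_le_sum_of_subset_of_nonneg h3
          intro u _ _
          split <;> [exact hx0 u; exact le_refl 0]
        calc ∑ w ∈ A, x w = x z + ∑ w ∈ A.erase z, x w := h1
          _ ≤ x z + ∑ u ∈ G.neighborFinset z, (if p u z then x u else 0) := by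
              rw [h2]; linarith
          _ ≤ 1 := hpack z
      have : ∑ w ∈ S, x w = ∑ w ∈ T, x w + ∑ w ∈ A, x w := by
        rw [hsplit, Finset.sum_union hdisj]
      rw [this, Finset.card_insert_of_notMem hzI']
      push_cast
      linarith

-- closed neighborhood sum bound
lemma closed_nbhd_sum_le {V : Type*} [Fintype V] [DecidableEq V] (G : SimpleGraph V)
    [DecidableRel G.Adj] (r : ℕ) (hr : 1 ≤ r)
    (hni : ∀ v : V, ∀ S : Finset V, (∀ u ∈ S, G.Adj v u) →
      (∀ u ∈ S, ∀ w ∈ S, u ≠ w → ¬ G.Adj u w) → S.card ≤ r)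
    (x : V → ℝ) (hx : IsGreedyPacking G x) (u : V) :
    ∑ w ∈ insert u (G.neighborFinset u), x w ≤ (r : ℝ) := by
  obtain ⟨hx0, p, hp, hpack⟩ := hx
  obtain ⟨I, hIsub, hIind, hIsum⟩ := sum_le_indep G x hx0 p hp hpack
    (insert u (G.neighborFinset u)).card (insert u (G.neighborFinset u)) le_rfl
  refine hIsum.trans ?_
  have hcard : I.card ≤ r := by
    by_cases hu : u ∈ I
    · -- I = {u}
      have : I = {u} := by
        apply Finset.eq_singleton_iff_unique_mem.2
        refine ⟨hu, fun b hb => ?_⟩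
        by_contra hne
        have hbmem := hIsub hb
        rcases Finset.mem_insert.1 hbmem with rfl | hbn
        · exact hne rfl
        · exact hIind u hu b hb (Ne.symm hne) ((G.mem_neighborFinset u b).1 hbn)
      rw [this]; simpa using hr
    · apply hni u I
      · intro w hw
        have := hIsub hw
        rcases Finset.mem_insert.1 this with rfl | hn
        · exact absurd hw hu
        · exact (G.mem_neighborFinset u w).1 hn
      · exact hIind
  exact_mod_cast hcard


/-- In a finite simple graph of neighborhood independence at most `r`,
if `x` and `y` are greedy packings and `U` is the set of vertices `v` with
`Σ_y(v) ≥ 1/2`, then `Σ_{v} y_v ≥ (1/(2r)) · Σ_{v ∈ U} x_v`. -/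
theorem greedyPacking_compare
    {V : Type*} [Fintype V] [DecidableEq V]
    (G : SimpleGraph V) [DecidableRel G.Adj]
    (r : ℕ) (hr : 1 ≤ r)
    (hni : ∀ v : V, ∀ S : Finset V, (∀ u ∈ S, G.Adj v u) →
      (∀ u ∈ S, ∀ w ∈ S, u ≠ w → ¬ G.Adj u w) → S.card ≤ r)
    (x y : V → ℝ) (hx : IsGreedyPacking G x) (hy : IsGreedyPacking G y) :
    (1 / (2 * (r : ℝ))) *
        ∑ v ∈ Finset.univ.filter
          (fun v => (1 : ℝ) / 2 ≤ y v + ∑ u ∈ G.neighborFinset v, y u), x v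
      ≤ ∑ v : V, y v := by
  classical
  set U := Finset.univ.filter
    (fun v => (1 : ℝ) / 2 ≤ y v + ∑ u ∈ G.neighborFinset v, y u) with hU
  have hrpos : (0 : ℝ) < 2 * (r : ℝ) := by positivity
  rw [div_mul_eq_mul_div, one_mul, div_le_iff₀ hrpos] at *
  -- goal now: ∑ v ∈ U, x v ≤ (∑ v, y v) * (2 * r)
  have hx0 := hx.1
  have hy0 := hy.1
  -- Step 1: x v ≤ 2 * ∑_{u ∈ N⁺(v)} x v * y u for v ∈ U
  have step1 : ∑ v ∈ U, x v ≤ 2 * ∑ v ∈ U, ∑ u ∈ insert v (G.neighborFinset v), x v * y u := by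
    rw [Finset.mul_sum]
    apply Finset.sum_le_sum
    intro v hv
    have hv2 : (1:ℝ)/2 ≤ y v + ∑ u ∈ G.neighborFinset v, y u := (Finset.mem_filter.1 hv).2
    have hvn : v ∉ G.neighborFinset v := by simp
    rw [Finset.sum_insert hvn, ← Finset.mul_sum, ← mul_add]
    nlinarith [hx0 v]
  -- Step 2: swap sums
  have step2 : ∑ v ∈ U, ∑ u ∈ insert v (G.neighborFinset v), x v * y u
      = ∑ u : V, ∑ v ∈ U.filter (fun v => v ∈ insert u (G.neighborFinset u)), x v * y u := by
    have h1 : ∀ v ∈ U, ∑ u ∈ insert v (G.neighborFinset v), x v * y u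
        = ∑ u : V, (if u ∈ insert v (G.neighborFinset v) then x v * y u else 0) := by
      intro v _
      rw [Finset.sum_ite_mem, Finset.univ_inter]
    rw [Finset.sum_congr rfl h1, Finset.sum_comm]
    apply Finset.sum_congr rfl
    intro u _
    conv_rhs => rw [Finset.sum_filter, hU, Finset.sum_filter]
    conv_lhs => rw [hU, Finset.sum_filter]
    apply Finset.sum_congr rfl
    intro a _
    by_cases hc : (1:ℝ)/2 ≤ y a + ∑ w ∈ G.neighborFinset a, y w
    · rw [if_pos hc, if_pos hc]
      have hiff : u ∈ insert a (G.neighborFinset a) ↔ a ∈ insert u (G.neighborFinset u) := by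
        simp only [Finset.mem_insert, SimpleGraph.mem_neighborFinset]
        constructor
        · rintro (rfl | h); exacts [Or.inl rfl, Or.inr (G.adj_symm h)]
        · rintro (rfl | h); exacts [Or.inl rfl, Or.inr (G.adj_symm h)]
      by_cases hm : u ∈ insert a (G.neighborFinset a)
      · rw [if_pos hm, if_pos (hiff.1 hm)]
      · rw [if_neg hm, if_neg (fun h => hm (hiff.2 h))]
    · rw [if_neg hc, if_neg hc]
  -- Step 3: inner bound
  have step3 : ∀ u : V, ∑ v ∈ U.filter (fun v => v ∈ insert u (G.neighborFinset u)), x v * y u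
      ≤ y u * r := by
    intro u
    have hsub : U.filter (fun v => v ∈ insert u (G.neighborFinset u))
        ⊆ insert u (G.neighborFinset u) := by
      intro v hv; exact (Finset.mem_filter.1 hv).2
    have h1 : ∑ v ∈ U.filter (fun v => v ∈ insert u (G.neighborFinset u)), x v
        ≤ ∑ v ∈ insert u (G.neighborFinset u), x v :=
      Finset.sum_le_sum_of_subset_of_nonneg hsub (fun i _ _ => hx0 i)
    have h2 := closed_nbhd_sum_le G r hr hni x hx u
    calc ∑ v ∈ U.filter (fun v => v ∈ insert u (G.neighborFinset u)), x v * y u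
        = (∑ v ∈ U.filter (fun v => v ∈ insert u (G.neighborFinset u)), x v) * y u := by
          rw [Finset.sum_mul]
      _ ≤ (r : ℝ) * y u := by
          apply mul_le_mul_of_nonneg_right _ (hy0 u)
          linarith
      _ = y u * r := mul_comm _ _
  calc ∑ v ∈ U, x v ≤ 2 * ∑ v ∈ U, ∑ u ∈ insert v (G.neighborFinset v), x v * y u := step1
    _ = 2 * ∑ u : V, ∑ v ∈ U.filter (fun v => v ∈ insert u (G.neighborFinset u)), x v * y u := by
        rw [step2]
    _ ≤ 2 * ∑ u : V, y u * r := by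
        apply mul_le_mul_of_nonneg_left (Finset.sum_le_sum (fun u _ => step3 u)) (by norm_num)
    _ = (∑ v : V, y v) * (2 * r) := by rw [← Finset.sum_mul]; ring
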